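/- Let m be a positive integer and let x be a real number with 0 < x < π. Then lim_{α→2m} [ π x^{α−1} / (4 Γ(α) sin(πα/2)) + (−1)^{m−1} λ(α−2m+1) x^{2m−1}/(2m−1)! ] = (−1)^m x^{2m−1} ( log(x/2) − H_{2m−1} ) / (2·(2m−1)!). -/

import Mathlib

open Filter Topology Real

/-- The Dirichlet lambda function `λ(s) = (1 - 2^(-s)) ζ(s)`, equal to
`∑_{n=1}^∞ (2n-1)^(-s)` for `Re s > 1`. -/
noncomputable def dirichletLambda (s : ℂ) : ℂ := (1 - (2 : ℂ) ^ (-s)) * riemannZeta s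

lemma my_sin_ne_zero {t : ℝ} (h0 : t ≠ 0) (h1 : |t| < π) : Real.sin t ≠ 0 := by
  rcases lt_or_gt_of_ne h0 with h | h
  · have : Real.sin (-t) > 0 := Real.sin_pos_of_pos_of_lt_pi (by linarith)
      (by rw [abs_of_neg h] at h1; linarith)
    rw [Real.sin_neg] at this; linarith
  · have : Real.sin t > 0 := Real.sin_pos_of_pos_of_lt_pi h
      (by rw [abs_of_pos h] at h1; linarith)
    linarith

lemma my_sinc_bound {t : ℝ} (ht : 0 < t) (ht1 : t ≤ 1) :
    |(t - Real.sin t) / (t * Real.sin t)| ≤ t := by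
  have h1 : t - t ^ 3 / 4 < Real.sin t := by
    have := Real.sin_gt_sub_cube ht; nlinarith [pow_pos ht 3]
  have h2 : Real.sin t < t := Real.sin_lt ht
  have ht3 : t ^ 3 ≤ t := by
    have := pow_le_pow_of_le_one ht.le ht1 (by norm_num : 1 ≤ 3)
    simpa using this
  have hs0 : 0 < Real.sin t := by nlinarith
  have hden : 0 < t * Real.sin t := by positivity
  rw [abs_of_nonneg (div_nonneg (by linarith) hden.le)]
  rw [div_le_iff₀ hden]
  nlinarith [mul_pos ht ht, sq_nonneg t]

lemma my_sinc_lim : Tendsto (fun t : ℝ => (t - Real.sin t) / (t * Real.sin t))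
    (𝓝[≠] (0:ℝ)) (𝓝 0) := by
  apply squeeze_zero_norm' (a := fun t : ℝ => |t|)
  · have h1 : Set.Ioo (-1 : ℝ) 1 ∈ 𝓝[≠] (0:ℝ) :=
      mem_nhdsWithin_of_mem_nhds (Ioo_mem_nhds (by norm_num) (by norm_num))
    filter_upwards [h1, self_mem_nhdsWithin] with t htm htne
    rcases lt_or_gt_of_ne (htne : t ≠ 0) with h | h
    · have hb := my_sinc_bound (t := -t) (by linarith) (by rcases htm with ⟨a, b⟩; linarith)
      rw [Real.sin_neg] at hb
      have : (-t - -Real.sin t) / (-t * -Real.sin t)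
          = -((t - Real.sin t) / (t * Real.sin t)) := by ring
      rw [this, abs_neg] at hb
      rw [Real.norm_eq_abs, abs_of_neg h]
      exact hb
    · have hb := my_sinc_bound h (by rcases htm with ⟨a, b⟩; linarith)
      rw [Real.norm_eq_abs, abs_of_pos h]
      exact hb
  · have : Tendsto (fun t : ℝ => |t|) (𝓝 (0:ℝ)) (𝓝 |0|) :=
      (continuous_abs).tendsto 0
    simpa using this.mono_left nhdsWithin_le_nhds

lemma my_u_lim : Tendsto (fun ε : ℝ => (ε / Real.sin (π * ε / 2) - 2 / π) / ε)
    (𝓝[≠] (0:ℝ)) (𝓝 0) := by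
  have hcomp : Tendsto (fun ε : ℝ => π * ε / 2) (𝓝[≠] (0:ℝ)) (𝓝[≠] (0:ℝ)) := by
    rw [tendsto_nhdsWithin_iff]
    constructor
    · have : Tendsto (fun ε : ℝ => π * ε / 2) (𝓝 (0:ℝ)) (𝓝 (π * 0 / 2)) :=
        ((continuous_const.mul continuous_id).div_const 2).tendsto 0
      simpa using this.mono_left nhdsWithin_le_nhds
    · filter_upwards [self_mem_nhdsWithin] with ε hε
      have : ε ≠ 0 := hε
      exact div_ne_zero (mul_ne_zero Real.pi_ne_zero this) two_ne_zero
  have := my_sinc_lim.comp hcomp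
  apply this.congr'
  have h1 : Set.Ioo (-1 : ℝ) 1 ∈ 𝓝[≠] (0:ℝ) :=
    mem_nhdsWithin_of_mem_nhds (Ioo_mem_nhds (by norm_num) (by norm_num))
  filter_upwards [h1, self_mem_nhdsWithin] with ε hεm hεne
  have hε : ε ≠ 0 := hεne
  have hsin : Real.sin (π * ε / 2) ≠ 0 := by
    apply my_sin_ne_zero
    · have := Real.pi_pos; positivity
    · rcases hεm with ⟨a, b⟩
      rw [abs_div, abs_mul, abs_of_pos Real.pi_pos]
      rw [div_lt_iff₀ (by norm_num : (0:ℝ) < |(2:ℝ)|)]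
      have h1 : |ε| < 1 := abs_lt.mpr ⟨a, b⟩
      have h2 : |(2:ℝ)| = 2 := by norm_num
      nlinarith [Real.pi_pos, abs_nonneg ε]
  show (π * ε / 2 - Real.sin (π * ε / 2)) / (π * ε / 2 * Real.sin (π * ε / 2))
      = (ε / Real.sin (π * ε / 2) - 2 / π) / ε
  have hπ : π ≠ 0 := Real.pi_ne_zero
  field_simp

/-- For a positive integer `m` and `0 < x < π`,
`lim_{α→2m} [ π x^(α-1)/(4 Γ(α) sin(πα/2)) + (-1)^(m-1) λ(α-2m+1) x^(2m-1)/(2m-1)! ]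
  = (-1)^m x^(2m-1) (log(x/2) - H_{2m-1}) / (2 (2m-1)!)`,
the limit being over real `α` tending to `2m` while avoiding `2m` itself. -/
theorem lambda_singular_limit_even (m : ℕ) (hm : 0 < m) (x : ℝ) (hx0 : 0 < x) (hx1 : x < π) :
    Filter.Tendsto
      (fun α : ℝ =>
        (π : ℂ) * (x : ℂ) ^ ((α : ℂ) - 1) /
            (4 * Complex.Gamma (α : ℂ) * Complex.sin ((π : ℂ) * α / 2)) +
          (-1) ^ (m - 1) * dirichletLambda ((α : ℂ) - 2 * m + 1) * (x : ℂ) ^ (2 * m - 1) /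
            (Nat.factorial (2 * m - 1) : ℂ))
      (𝓝[≠] (2 * m : ℝ))
      (𝓝 ((-1) ^ m * (x : ℂ) ^ (2 * m - 1) *
          ((Real.log (x / 2) : ℂ) - (harmonic (2 * m - 1) : ℂ)) /
        (2 * (Nat.factorial (2 * m - 1) : ℂ)))) := by
  obtain ⟨n, hn⟩ : ∃ n : ℕ, 2 * m = n + 1 := ⟨2 * m - 1, by omega⟩
  have hn' : 2 * m - 1 = n := by omega
  rw [hn']
  set γ' : ℝ := Real.eulerMascheroniConstant with hγ'
  set c : ℝ := 2 * m with hc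
  set K : ℝ := (Nat.factorial n : ℝ) with hK
  set X : ℝ := x ^ n with hX
  set H : ℝ := ((harmonic n : ℚ) : ℝ) with hH
  have hKpos : (0:ℝ) < K := by rw [hK]; exact_mod_cast Nat.factorial_pos n
  have hπ := Real.pi_pos
  have hcn : c = (n : ℝ) + 1 := by rw [hc]; exact_mod_cast congrArg (Nat.cast (R := ℝ)) hn
  have hc2 : (2:ℝ) ≤ c := by
    have h1 : 1 ≤ n := by omega
    have h2 : (1:ℝ) ≤ (n:ℝ) := by exact_mod_cast h1
    rw [hcn]; linarith
  have hΓc : Real.Gamma c = K := by rw [hcn, hK]; exact_mod_cast Real.Gamma_nat_eq_factorial n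
  set Ar : ℝ → ℝ := fun α => π * x ^ (α - 1) / (4 * Real.Gamma α) with hAr
  set wr : ℝ → ℝ := fun α => 1 - (2:ℝ) ^ (c - 1 - α) with hwr
  set uu : ℝ → ℝ := fun ε => if ε = 0 then 2 / π else ε / Real.sin (π * ε / 2) with huu
  set C2r : ℝ := (-1) ^ (m - 1) * X / K with hC2r
  set Nr : ℝ → ℝ := fun α => (-1) ^ m * Ar α * uu (α - c) + C2r * wr α with hNr
  have hu0 : uu 0 = 2 / π := by rw [huu]; simp
  have hwc : wr c = 1 / 2 := by
    rw [hwr]; simp only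
    rw [show c - 1 - c = (-1:ℝ) by ring, Real.rpow_neg_one]; norm_num
  have hxc : x ^ (c - 1) = X := by
    rw [show c - 1 = (n:ℝ) by rw [hcn]; ring, Real.rpow_natCast, hX]
  have hAc : Ar c = π * X / (4 * K) := by rw [hAr]; simp only; rw [hΓc, hxc]
  have hm1 : (-1:ℝ) ^ m = (-1) ^ (m-1) * (-1) := by
    conv_lhs => rw [show m = (m-1)+1 by omega]
    rw [pow_succ]
  have hNrc : Nr c = 0 := by
    rw [hNr]; simp only
    rw [sub_self, hu0, hAc, hwc, hC2r, hm1]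
    field_simp
    ring
  -- derivatives
  have hP : HasDerivAt (fun α : ℝ => x ^ (α - 1)) (X * Real.log x) c := by
    have h1 := (Real.hasStrictDerivAt_const_rpow hx0 (c - 1)).hasDerivAt
    have h2 : HasDerivAt (fun α : ℝ => α - 1) 1 c := (hasDerivAt_id c).sub_const 1
    have h3 := h1.comp c h2
    simp only [hxc, mul_one] at h3
    exact h3
  have hG : HasDerivAt Real.Gamma (K * (-γ' + H)) c := by
    have h1 := Real.hasDerivAt_Gamma_nat n
    have h2 : (K * (-γ' + H)) = (Nat.factorial n : ℝ) * (-Real.eulerMascheroniConstant + ((harmonic n : ℚ) : ℝ)) := by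
      rw [hK, hH, hγ']
    rw [h2, hcn]; exact h1
  have hΓne : (4 : ℝ) * Real.Gamma c ≠ 0 := by rw [hΓc]; positivity
  set Ar' : ℝ := (π * (X * Real.log x) * (4 * Real.Gamma c) - π * x ^ (c - 1) * (4 * (K * (-γ' + H)))) / (4 * Real.Gamma c) ^ 2 with hAr'd
  have hA : HasDerivAt Ar Ar' c := (hP.const_mul π).div (hG.const_mul 4) hΓne
  have hW : HasDerivAt wr (Real.log 2 / 2) c := by
    have h1 := (Real.hasStrictDerivAt_const_rpow (by norm_num : (0:ℝ) < 2) (c - 1 - c)).hasDerivAt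
    have h2 : HasDerivAt (fun α : ℝ => c - 1 - α) (-1) c := by
      simpa using (hasDerivAt_id c).const_sub (c - 1)
    have h3 := h1.comp c h2
    have h4 := h3.const_sub 1
    have h5 : -((2:ℝ) ^ (c - 1 - c) * Real.log 2 * (-1)) = Real.log 2 / 2 := by
      rw [show c - 1 - c = (-1:ℝ) by ring, Real.rpow_neg_one]; ring
    rw [hwr, ← h5]
    exact h4
  have hslopeA : Tendsto (fun α => (Ar α - Ar c) / (α - c)) (𝓝[≠] c) (𝓝 Ar') := by
    have h1 := hasDerivAt_iff_tendsto_slope.mp hA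
    apply h1.congr
    intro α; rw [slope_def_field]
  have hslopeW : Tendsto (fun α => (wr α - wr c) / (α - c)) (𝓝[≠] c) (𝓝 (Real.log 2 / 2)) := by
    have h1 := hasDerivAt_iff_tendsto_slope.mp hW
    apply h1.congr
    intro α; rw [slope_def_field]
  have hsub : Tendsto (fun α : ℝ => α - c) (𝓝[≠] c) (𝓝[≠] 0) := by
    rw [tendsto_nhdsWithin_iff]; constructor
    · have h1 : Tendsto (fun α : ℝ => α - c) (𝓝 c) (𝓝 (c - c)) :=
        (continuous_id.sub continuous_const).tendsto c
      simpa using h1.mono_left nhdsWithin_le_nhds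
    · filter_upwards [self_mem_nhdsWithin] with α hα
      exact sub_ne_zero.mpr hα
  have hUlim : Tendsto (fun α : ℝ => (uu (α - c) - 2 / π) / (α - c)) (𝓝[≠] c) (𝓝 0) := by
    have h1 := my_u_lim.comp hsub
    apply h1.congr'
    filter_upwards [self_mem_nhdsWithin] with α hα
    have hε : α - c ≠ 0 := sub_ne_zero.mpr hα
    rw [huu]; simp [hε]
  have hArm : Tendsto (fun α : ℝ => (-1:ℝ) ^ m * Ar α) (𝓝[≠] c) (𝓝 ((-1) ^ m * Ar c)) :=
    ((continuousAt_const.mul hA.continuousAt).tendsto).mono_left nhdsWithin_le_nhds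
  set L2 : ℝ := (-1) ^ m * Ar c * 0 + ((-1) ^ m * (2 / π) * Ar' + C2r * (Real.log 2 / 2)) with hL2
  have hQ : Tendsto (fun α : ℝ => Nr α / (α - c)) (𝓝[≠] c) (𝓝 L2) := by
    have hT := (hArm.mul hUlim).add
      ((hslopeA.const_mul ((-1:ℝ) ^ m * (2 / π))).add (hslopeW.const_mul C2r))
    rw [hL2]
    apply hT.congr'
    filter_upwards [self_mem_nhdsWithin] with α hα
    have hε : α - c ≠ 0 := sub_ne_zero.mpr hα
    have key : Nr α = (-1)^m * Ar α * (uu (α - c) - 2/π)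
        + ((-1)^m * (2/π) * (Ar α - Ar c) + C2r * (wr α - wr c)) := by
      have h0 : (-1:ℝ)^m * Ar c * uu (c - c) + C2r * wr c = 0 := hNrc
      rw [sub_self, hu0] at h0
      rw [hNr]; simp only
      linear_combination h0
    rw [key]
    field_simp
  have hQC : Tendsto (fun α : ℝ => ((Nr α / (α - c) : ℝ) : ℂ)) (𝓝[≠] c) (𝓝 (L2 : ℂ)) :=
    (Complex.continuous_ofReal.tendsto L2).comp hQ
  have hσ : Tendsto (fun α : ℝ => (α : ℂ) - 2 * m + 1) (𝓝[≠] c) (𝓝[≠] (1:ℂ)) := by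
    rw [tendsto_nhdsWithin_iff]; constructor
    · have h1 : Tendsto (fun α : ℝ => (α : ℂ) - 2 * m + 1) (𝓝 c) (𝓝 ((c:ℂ) - 2 * m + 1)) :=
        Continuous.tendsto ((Complex.continuous_ofReal.sub continuous_const).add continuous_const) c
      have h2 : (c:ℂ) - 2 * m + 1 = 1 := by rw [hc]; push_cast; ring
      rw [h2] at h1
      exact h1.mono_left nhdsWithin_le_nhds
    · filter_upwards [self_mem_nhdsWithin] with α hα
      simp only [Set.mem_compl_iff, Set.mem_singleton_iff]
      intro hbad
      apply hα
      have h3 : (α:ℂ) = (c:ℂ) := by rw [hc]; push_cast; linear_combination hbad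
      exact_mod_cast h3
  have hZ := tendsto_riemannZeta_sub_one_div.comp hσ
  have hwrC : Tendsto (fun α : ℝ => ((wr α : ℝ) : ℂ)) (𝓝[≠] c) (𝓝 ((1:ℂ)/2)) := by
    have h2 : Tendsto (fun α : ℝ => ((wr α : ℝ):ℂ)) (𝓝 c) (𝓝 ((wr c : ℝ):ℂ)) :=
      (Complex.continuous_ofReal.tendsto _).comp hW.continuousAt
    rw [hwc] at h2; push_cast at h2
    exact h2.mono_left nhdsWithin_le_nhds
  have hZfull : Tendsto (fun α : ℝ => (C2r : ℂ) * ((wr α : ℝ) : ℂ) *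
      (riemannZeta ((α:ℂ) - 2 * m + 1) - 1 / (((α:ℂ) - 2 * m + 1) - 1)))
      (𝓝[≠] c) (𝓝 ((C2r:ℂ) * (1/2) * (γ' : ℂ))) :=
    (tendsto_const_nhds.mul hwrC).mul hZ
  have hRHS := hZfull.add hQC
  -- final value identity
  have hlog : Real.log (x / 2) = Real.log x - Real.log 2 := Real.log_div hx0.ne' two_ne_zero
  have hreal2 : C2r * (1/2) * γ' + L2 = (-1)^m * X * (Real.log (x/2) - H) / (2*K) := by
    rw [hL2, hAr'd, hC2r, hΓc, hxc, hAc, hlog, hm1]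
    field_simp
    ring
  have hVT : (C2r:ℂ) * (1/2) * (γ':ℂ) + (L2:ℂ)
      = (-1)^m * (x:ℂ)^n * ((Real.log (x/2) : ℂ) - ((harmonic n : ℚ):ℂ)) / (2 * ((Nat.factorial n : ℕ):ℂ)) := by
    calc (C2r:ℂ) * (1/2) * (γ':ℂ) + (L2:ℂ)
        = ((C2r * (1/2) * γ' + L2 : ℝ) : ℂ) := by push_cast; ring
      _ = (((-1:ℝ)^m * X * (Real.log (x/2) - H) / (2*K) : ℝ) : ℂ) := by rw [hreal2]
      _ = (-1)^m * (x:ℂ)^n * ((Real.log (x/2) : ℂ) - ((harmonic n : ℚ):ℂ)) / (2 * ((Nat.factorial n : ℕ):ℂ)) := by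
          rw [hX, hH, hK]; push_cast; ring
  rw [← hVT]
  apply Filter.Tendsto.congr' _ hRHS
  have hIoo : Set.Ioo (c-1) (c+1) ∈ 𝓝[≠] c :=
    mem_nhdsWithin_of_mem_nhds (Ioo_mem_nhds (by linarith) (by linarith))
  filter_upwards [hIoo, self_mem_nhdsWithin] with α hmem hne
  have hαne : α ≠ c := hne
  have hεne : α - c ≠ 0 := sub_ne_zero.mpr hαne
  obtain ⟨hma, hmb⟩ := hmem
  have hsin0 : Real.sin (π * (α - c) / 2) ≠ 0 := by
    apply my_sin_ne_zero
    · exact div_ne_zero (mul_ne_zero Real.pi_ne_zero hεne) two_ne_zero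
    · rw [abs_div, abs_mul, abs_of_pos hπ, abs_two]
      rw [div_lt_iff₀ (by norm_num : (0:ℝ) < 2)]
      have h1 : |α - c| < 1 := abs_lt.mpr ⟨by linarith, by linarith⟩
      have h2 : π * |α - c| < π * 1 := by
        exact mul_lt_mul_of_pos_left h1 hπ
      linarith
  have hsinα : Real.sin (π * α / 2) = (-1)^m * Real.sin (π * (α - c) / 2) := by
    rw [show π * α / 2 = π * (α - c) / 2 + m * π by rw [hc]; ring]
    exact Real.sin_add_nat_mul_pi _ m
  have hsinαne : Real.sin (π * α / 2) ≠ 0 := by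
    rw [hsinα]
    exact mul_ne_zero (pow_ne_zero _ (by norm_num)) hsin0
  have hΓα : Real.Gamma α ≠ 0 := (Real.Gamma_pos_of_pos (by linarith)).ne'
  have hsq : ((-1:ℝ))^m * (-1)^m = 1 := by
    rw [← pow_add, show m + m = 2*m by ring, pow_mul]; norm_num
  have hreal : π * x ^ (α - 1) / (4 * Real.Gamma α * Real.sin (π * α / 2))
      = Nr α / (α - c) - C2r * wr α / (α - c) := by
    rw [hNr]; simp only
    rw [huu]; simp only [if_neg hεne]
    rw [hsinα, hAr]; simp only
    field_simp
    ring_nf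
    rw [show ((-1:ℝ))^(m*2) = 1 by rw [mul_comm, pow_mul]; norm_num]
    ring
  -- now the cast assembly
  have e1 : (x:ℂ) ^ ((α:ℂ) - 1) = ((x ^ (α - 1) : ℝ) : ℂ) := by
    rw [show (α:ℂ) - 1 = ((α - 1 : ℝ) : ℂ) by push_cast; ring,
      Complex.ofReal_cpow hx0.le]
  have e2 : Complex.Gamma (α:ℂ) = ((Real.Gamma α : ℝ) : ℂ) := Complex.Gamma_ofReal α
  have e3 : Complex.sin ((π:ℂ) * α / 2) = ((Real.sin (π * α / 2) : ℝ) : ℂ) := by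
    rw [show (π:ℂ) * α / 2 = ((π * α / 2 : ℝ) : ℂ) by push_cast; ring, Complex.ofReal_sin]
  have e4 : (2:ℂ) ^ (-((α:ℂ) - 2 * m + 1)) = (((2:ℝ) ^ (c - 1 - α) : ℝ) : ℂ) := by
    rw [show -((α:ℂ) - 2 * m + 1) = ((c - 1 - α : ℝ) : ℂ) by rw [hc]; push_cast; ring,
      show (2:ℂ) = ((2:ℝ):ℂ) by norm_num, Complex.ofReal_cpow (by norm_num : (0:ℝ) ≤ 2)]
  have e5 : ((α:ℂ) - 2 * m + 1) - 1 = ((α - c : ℝ) : ℂ) := by rw [hc]; push_cast; ring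
  have hcoef : ((-1:ℂ)) ^ (m - 1) * (1 - (((2:ℝ) ^ (c - 1 - α) : ℝ) : ℂ)) * (x:ℂ) ^ n
        / ((Nat.factorial n : ℕ) : ℂ) = ((C2r * wr α : ℝ) : ℂ) := by
    rw [hC2r, hwr, hX, hK]; push_cast; ring
  rw [dirichletLambda, e1, e2, e3, e4, e5]
  rw [show ((-1:ℂ)) ^ (m - 1) * ((1 - (((2:ℝ) ^ (c - 1 - α) : ℝ) : ℂ)) * riemannZeta ((α:ℂ) - 2 * m + 1)) * (x:ℂ) ^ n / ((Nat.factorial n : ℕ) : ℂ)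
      = ((C2r * wr α : ℝ) : ℂ) * riemannZeta ((α:ℂ) - 2 * m + 1) by rw [← hcoef]; ring]
  have hrealC := congrArg (Complex.ofReal) hreal
  push_cast at hrealC ⊢
  rw [hrealC]
  ring
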